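/- For σ > 0 and β < 0, the mass expressed in terms of the charge q is M(q) = q² e^(2γ + 4πβ q^(2σ)) / (16π) for q > 0, i.e., substituting ω = ω(q) = 4e^(-2γ - 4πβ q^(2σ)) into M = q²/(4πω) yields this formula; moreover sup_{q>0} M(q) = M(q̄) = μ̄ with q̄ = (-4πσβ)^(-1/(2σ)) and μ̄ = e^(2γ-1/σ)/(16π(-4πσβ)^(1/σ)). -/

import Mathlib

noncomputable section
open Real Filter Set Topology

/-- The Euler–Mascheroni constant. -/
def euγ : ℝ := Real.eulerMascheroniConstant

/-- The threshold frequency. -/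
def ωtilde : ℝ := 4 * Real.exp (-2 * euγ)

/-- The charge of the standing wave at frequency ω. -/
def charge (σ β ω : ℝ) : ℝ :=
  (-(Real.log (Real.sqrt ω / 2) + euγ) / (2 * π * β)) ^ (1 / (2 * σ))

/-- The inverse change of variables, frequency as a function of the charge. -/
def ωof (σ β q : ℝ) : ℝ := 4 * Real.exp (-2 * euγ - 4 * π * β * q ^ (2 * σ))

/-- Energy of the standing wave as a function of the frequency. -/
def Eω (σ β ω : ℝ) : ℝ :=
  (σ * (Real.log (Real.sqrt ω / 2) + euγ) / (2 * π * (σ + 1)) - 1 / (4 * π)) *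
    (-(Real.log (Real.sqrt ω / 2) + euγ) / (2 * π * β)) ^ (1 / σ)

/-- Energy of the standing wave as a function of the charge. -/
def Echarge (σ β q : ℝ) : ℝ := -q ^ 2 / (4 * π) - σ * β * q ^ (2 * σ + 2) / (σ + 1)

/-- Mass of the standing wave as a function of the frequency. -/
def Mω (σ β ω : ℝ) : ℝ :=
  (1 / (4 * π * ω)) * (-(Real.log (Real.sqrt ω / 2) + euγ) / (2 * π * β)) ^ (1 / σ)

/-- Mass of the standing wave as a function of the charge. -/
def Mq (σ β q : ℝ) : ℝ := q ^ 2 * Real.exp (2 * euγ + 4 * π * β * q ^ (2 * σ)) / (16 * π)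

/-- The minimizing charge. -/
def qbar (σ β : ℝ) : ℝ := (-(4 * π * σ * β)) ^ (-(1 / (2 * σ)) : ℝ)

/-- The blow-up energy threshold. -/
def Λ (σ β : ℝ) : ℝ := -σ / (4 * π * (σ + 1) * (-(4 * π * σ * β)) ^ (1 / σ))

/-- The frequency of minimal energy / maximal mass. -/
def ωbar (σ : ℝ) : ℝ := 4 * Real.exp (-2 * euγ + 1 / σ)

/-- The maximal mass. -/
def μbar (σ β : ℝ) : ℝ :=
  Real.exp (2 * euγ - 1 / σ) / (16 * π * (-(4 * π * σ * β)) ^ (1 / σ))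

theorem stmt11 (σ β : ℝ) (hσ : 0 < σ) (hβ : β < 0) :
    (∀ q > 0, Mq σ β q = q ^ 2 / (4 * π * ωof σ β q)) ∧
    IsGreatest (Mq σ β '' Set.Ioi 0) (Mq σ β (qbar σ β)) ∧
    Mq σ β (qbar σ β) = μbar σ β := by
  have hπ : (0:ℝ) < π := Real.pi_pos
  set a : ℝ := -(4*π*β) with ha_def
  have ha : 0 < a := by simp only [ha_def]; nlinarith
  set A : ℝ := -(4*π*σ*β) with hA_def
  have hA : 0 < A := by simp only [hA_def]; nlinarith
  have hAa : A = σ * a := by rw [hA_def, ha_def]; ring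
  have hqbar_pos : 0 < qbar σ β := Real.rpow_pos_of_pos hA _
  have hqbarA : qbar σ β = A ^ (-(1 / (2 * σ)) : ℝ) := by rw [qbar, ← hA_def]
  have hqbar2σ : (qbar σ β) ^ (2*σ : ℝ) = A⁻¹ := by
    rw [hqbarA, ← Real.rpow_mul hA.le]
    rw [show -(1 / (2 * σ)) * (2 * σ) = -1 by field_simp]
    exact Real.rpow_neg_one A
  have hqbar2 : (qbar σ β) ^ 2 = A ^ (-(1/σ) : ℝ) := by
    rw [hqbarA, ← Real.rpow_natCast (A ^ (-(1 / (2 * σ)) : ℝ)) 2, ← Real.rpow_mul hA.le]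
    norm_num
    ring_nf
  have hbetaA : 4 * π * β * A⁻¹ = -(1/σ) := by
    rw [hA_def]
    field_simp
    simp [hβ.ne]
  -- Mass at qbar
  have hMqbar : Mq σ β (qbar σ β) = A ^ (-(1/σ) : ℝ) * Real.exp (2 * euγ - 1/σ) / (16 * π) := by
    rw [Mq, hqbar2σ, hqbar2, hbetaA]
    ring_nf
  -- Part 3
  have part3 : Mq σ β (qbar σ β) = μbar σ β := by
    rw [hMqbar, μbar, ← hA_def, Real.rpow_neg hA.le]
    have h1 : A ^ (1/σ : ℝ) ≠ 0 := (Real.rpow_pos_of_pos hA _).ne'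
    field_simp
  -- Part 1
  have part1 : ∀ q > 0, Mq σ β q = q ^ 2 / (4 * π * ωof σ β q) := by
    intro q hq
    rw [Mq, ωof, show -2 * euγ - 4 * π * β * q ^ (2*σ) = -(2 * euγ + 4 * π * β * q ^ (2*σ)) by ring,
      Real.exp_neg]
    have he : Real.exp (2 * euγ + 4 * π * β * q ^ (2*σ)) ≠ 0 := Real.exp_ne_zero _
    field_simp
    ring
  -- Part 2 : upper bound
  have part2 : ∀ q > 0, Mq σ β q ≤ Mq σ β (qbar σ β) := by
    intro q hq
    set t : ℝ := q ^ (2*σ : ℝ) with ht_def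
    have ht : 0 < t := Real.rpow_pos_of_pos hq _
    have hq2 : q ^ 2 = t ^ (1/σ : ℝ) := by
      rw [ht_def, ← Real.rpow_mul hq.le, ← Real.rpow_natCast q 2]
      norm_num
      rw [show 2 * σ * σ⁻¹ = (2:ℝ) by field_simp]
      exact (Real.rpow_two q).symm
    have hbt : 4 * π * β * t = -(a * t) := by rw [ha_def]; ring
    rw [Mq, hMqbar, hq2, hbt]
    have key : t ^ (1/σ : ℝ) * Real.exp (2 * euγ + -(a * t)) ≤
        A ^ (-(1/σ) : ℝ) * Real.exp (2 * euγ - 1/σ) := by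
      rw [Real.rpow_def_of_pos ht, Real.rpow_def_of_pos hA, ← Real.exp_add, ← Real.exp_add]
      apply Real.exp_le_exp.mpr
      have hlog : Real.log A + Real.log t ≤ σ * a * t - 1 := by
        have h := Real.log_le_sub_one_of_pos (mul_pos hA ht)
        rw [Real.log_mul hA.ne' ht.ne'] at h
        nlinarith [h, hAa]
      have hσ' : (0:ℝ) < 1/σ := by positivity
      have h2 := mul_le_mul_of_nonneg_left hlog hσ'.le
      have h3 : (1/σ) * (σ * a * t - 1) = a * t - 1/σ := by field_simp
      rw [h3] at h2
      nlinarith [h2]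
    have h16 : (0:ℝ) < 16 * π := by positivity
    exact div_le_div_of_nonneg_right key h16.le
  refine ⟨part1, ⟨⟨qbar σ β, hqbar_pos, rfl⟩, ?_⟩, part3⟩
  rintro m ⟨q, hq, rfl⟩
  exact part2 q hq
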